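/- The following hold: (ii) for all v1, v2 ∈ D2, the vector K(v1,v2) − (λ1/2)⟨v1,v2⟩·e1 lies in D3 (i.e. L takes values in D3); and (iii) for all v ∈ D2 and w ∈ D3, K(v,w) ∈ D2. -/
import Mathlib


open scoped RealInnerProductSpace
open Module Submodule

noncomputable section

variable {V : Type*} [NormedAddCommGroup V] [InnerProductSpace ℝ V]

/-- The curvature-type operator built from `ε` and the difference tensor `K`:
`R(X,Y)Z = ε(⟨Y,Z⟩X − ⟨X,Z⟩Y) − K(X,K(Y,Z)) + K(Y,K(X,Z))`. -/
def Rc (ε : ℝ) (K : V →ₗ[ℝ] V →ₗ[ℝ] V) (X Y Z : V) : V :=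
  ε • (⟪Y, Z⟫ • X - ⟪X, Z⟫ • Y) - K X (K Y Z) + K Y (K X Z)

/-- The bilinear map `L(v₁,v₂) = K(v₁,v₂) − (λ₁/2)⟨v₁,v₂⟩ e₁`. -/
def Lop (lam1 : ℝ) (e1 : V) (K : V →ₗ[ℝ] V →ₗ[ℝ] V) (v1 v2 : V) : V :=
  K v1 v2 - (lam1 / 2 * ⟪v1, v2⟫) • e1

/-- The distribution `D₂ = {v : v ⟂ e₁, K(e₁,v) = (λ₁/2)v}`. -/
def D2s (lam1 : ℝ) (e1 : V) (K : V →ₗ[ℝ] V →ₗ[ℝ] V) : Submodule ℝ V :=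
  (ℝ ∙ e1)ᗮ ⊓ Module.End.eigenspace (K e1) (lam1 / 2)

/-- The distribution `D₃ = {w : w ⟂ e₁, K(e₁,w) = μw}`. -/
def D3s (mu : ℝ) (e1 : V) (K : V →ₗ[ℝ] V →ₗ[ℝ] V) : Submodule ℝ V :=
  (ℝ ∙ e1)ᗮ ⊓ Module.End.eigenspace (K e1) mu

/-- The operator `P_v(ṽ) = K(v, L(v,ṽ))`, as a linear endomorphism of `V`. -/
def Pop (lam1 : ℝ) (e1 : V) (K : V →ₗ[ℝ] V →ₗ[ℝ] V) (v : V) : V →ₗ[ℝ] V :=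
  (K v) ∘ₗ (K v - (lam1 / 2) •
    ((LinearMap.toSpanSingleton ℝ V e1) ∘ₗ (innerSL ℝ v).toLinearMap))

/-- The eigenspace `V_v(c)` of `P_v` within the orthogonal complement of `v` in `D₂`. -/
def Vvs (lam1 c : ℝ) (e1 : V) (K : V →ₗ[ℝ] V →ₗ[ℝ] V) (v : V) : Submodule ℝ V :=
  D2s lam1 e1 K ⊓ (ℝ ∙ v)ᗮ ⊓ Module.End.eigenspace (Pop lam1 e1 K v) c

/-- Lemma 4.2 (ii) and (iii): `L` takes values in `D₃`, and `K` maps `D₂ × D₃` into `D₂`. -/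
theorem stmt_4 {V : Type*} [NormedAddCommGroup V] [InnerProductSpace ℝ V]
    (n m : ℕ) (hn : finrank ℝ V = n) (hn2 : 2 ≤ n)
    (ε : ℝ) (hε : ε = 1 ∨ ε = -1)
    (K : V →ₗ[ℝ] V →ₗ[ℝ] V)
    (hKsymm : ∀ X Y : V, K X Y = K Y X)
    (hKcub : ∀ X Y Z : V, ⟪K X Y, Z⟫ = ⟪K X Z, Y⟫)
    (hpar : ∀ X Y Z U : V,
      Rc ε K X Y (K Z U) = K (Rc ε K X Y Z) U + K Z (Rc ε K X Y U))
    (e1 : V) (he1 : ‖e1‖ = 1)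
    (lam1 η μ τ : ℝ)
    (hlam1 : lam1 = ⟪K e1 e1, e1⟫) (hlam1pos : 0 < lam1)
    (hmax : ∀ u : V, ‖u‖ = 1 → ⟪K u u, u⟫ ≤ lam1)
    (hdisc : 0 < lam1 ^ 2 - 4 * ε)
    (hη : η = Real.sqrt (lam1 ^ 2 - 4 * ε) / 2)
    (hμ : μ = (lam1 - Real.sqrt (lam1 ^ 2 - 4 * ε)) / 2)
    (hτ : τ = η * (η + lam1 / 2) / 4)
    (hm2 : 2 ≤ m) (hmn : m ≤ n - 1)
    (hdimD2 : finrank ℝ (D2s lam1 e1 K) = m - 1)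
    (hsplit : (ℝ ∙ e1) ⊔ D2s lam1 e1 K ⊔ D3s μ e1 K = ⊤)
    :
    (∀ v1 ∈ D2s lam1 e1 K, ∀ v2 ∈ D2s lam1 e1 K,
        K v1 v2 - (lam1 / 2 * ⟪v1, v2⟫) • e1 ∈ D3s μ e1 K) ∧
    (∀ v ∈ D2s lam1 e1 K, ∀ w ∈ D3s μ e1 K, K v w ∈ D2s lam1 e1 K) := by
  have h11 : ⟪e1, e1⟫ = (1:ℝ) := by
    rw [real_inner_self_eq_norm_mul_norm, he1]; norm_num
  set s := Real.sqrt (lam1 ^ 2 - 4 * ε) with hsdef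
  have hs2 : s ^ 2 = lam1 ^ 2 - 4 * ε := Real.sq_sqrt hdisc.le
  have hspos : 0 < s := Real.sqrt_pos.mpr hdisc
  have hroot : μ ^ 2 - lam1 * μ + ε = 0 := by
    rw [hμ]; linear_combination hs2 / 4
  have hcoeff : ε - lam1 ^ 2 / 4 ≠ 0 := ne_of_lt (by linarith)
  have hμlt : μ < lam1 / 2 := by rw [hμ]; linarith
  have hD2 : ∀ v : V, v ∈ D2s lam1 e1 K ↔ ⟪e1, v⟫ = 0 ∧ K e1 v = (lam1 / 2) • v := by
    intro v
    rw [D2s, Submodule.mem_inf, Submodule.mem_orthogonal_singleton_iff_inner_right,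
      Module.End.mem_eigenspace_iff]
  have hD3 : ∀ w : V, w ∈ D3s μ e1 K ↔ ⟪e1, w⟫ = 0 ∧ K e1 w = μ • w := by
    intro w
    rw [D3s, Submodule.mem_inf, Submodule.mem_orthogonal_singleton_iff_inner_right,
      Module.End.mem_eigenspace_iff]
  have hortho : ∀ v ∈ D2s lam1 e1 K, ∀ w ∈ D3s μ e1 K, ⟪v, w⟫ = 0 := by
    intro v hv w hw
    obtain ⟨_, hv2⟩ := (hD2 v).mp hv
    obtain ⟨_, hw2⟩ := (hD3 w).mp hw
    have h1 : ⟪K e1 v, w⟫ = ⟪K e1 w, v⟫ := hKcub e1 v w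
    rw [hv2, hw2, real_inner_smul_left, real_inner_smul_left, real_inner_comm w v] at h1
    rw [real_inner_comm]
    by_contra hne
    exact hμlt.ne' (mul_right_cancel₀ hne h1)
  have hdecomp0 : ∀ x : V, ∃ c : ℝ, ∃ v w : V,
      v ∈ D2s lam1 e1 K ∧ w ∈ D3s μ e1 K ∧ x = c • e1 + v + w := by
    intro x
    have hx : x ∈ (ℝ ∙ e1) ⊔ D2s lam1 e1 K ⊔ D3s μ e1 K := hsplit.symm ▸ Submodule.mem_top
    obtain ⟨y, hy, w, hw, rfl⟩ := Submodule.mem_sup.mp hx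
    obtain ⟨u, hu, v, hv, rfl⟩ := Submodule.mem_sup.mp hy
    obtain ⟨c, rfl⟩ := Submodule.mem_span_singleton.mp hu
    exact ⟨c, v, w, hv, hw, rfl⟩
  have hKee : K e1 e1 = lam1 • e1 := by
    have key : ∀ x : V, ⟪x, K e1 e1 - lam1 • e1⟫ = 0 := by
      intro x
      obtain ⟨c, v, w, hv, hw, rfl⟩ := hdecomp0 x
      obtain ⟨hv1, hv2⟩ := (hD2 v).mp hv
      obtain ⟨hw1, hw2⟩ := (hD3 w).mp hw
      have hve1 : ⟪v, e1⟫ = 0 := by rw [real_inner_comm]; exact hv1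
      have hwe1 : ⟪w, e1⟫ = 0 := by rw [real_inner_comm]; exact hw1
      have hvK : ⟪v, K e1 e1⟫ = 0 := by
        rw [real_inner_comm, hKcub e1 e1 v, hv2, real_inner_smul_left, hve1, mul_zero]
      have hwK : ⟪w, K e1 e1⟫ = 0 := by
        rw [real_inner_comm, hKcub e1 e1 w, hw2, real_inner_smul_left, hwe1, mul_zero]
      have heK : ⟪e1, K e1 e1⟫ = lam1 := by rw [real_inner_comm]; exact hlam1.symm
      simp only [inner_add_left, inner_sub_right, real_inner_smul_left, real_inner_smul_right,
        h11, heK, hvK, hwK, hve1, hwe1, mul_zero, mul_one, zero_sub, add_zero, zero_add,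
        sub_zero, sub_self, neg_zero]
      ring
    have h0 : K e1 e1 - lam1 • e1 = 0 :=
      inner_self_eq_zero.mp (key (K e1 e1 - lam1 • e1))
    exact sub_eq_zero.mp h0
  have hkey : ∀ v ∈ D2s lam1 e1 K, ∀ (Z : V) (c : ℝ), ⟪e1, Z⟫ = 0 → K e1 Z = c • Z →
      K e1 (K e1 (K v Z)) = (2 * c) • K e1 (K v Z) + (lam1 ^ 2 / 4 - ε - c ^ 2) • K v Z
        + (ε * (lam1 - c) * ⟪v, Z⟫) • e1 := by
    intro v hv Z c hZ1 hZ2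
    obtain ⟨hv1, hv2⟩ := (hD2 v).mp hv
    have hve1 : ⟪v, e1⟫ = 0 := by rw [real_inner_comm]; exact hv1
    have hKve1 : K v e1 = (lam1 / 2) • v := by rw [hKsymm]; exact hv2
    have H := hpar e1 v e1 Z
    simp only [Rc, hZ2, hKee, hKve1, hv2, map_smul, map_add, map_sub, map_neg,
      neg_smul, smul_neg, neg_neg, sub_neg_eq_add, LinearMap.neg_apply, LinearMap.smul_apply,
      LinearMap.add_apply, LinearMap.sub_apply, real_inner_smul_right, inner_smul_right,
      h11, hZ1, hve1, smul_smul, smul_sub, smul_add, zero_smul, one_smul, mul_zero,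
      zero_mul, sub_zero, zero_sub, smul_zero, add_zero, zero_add, mul_one] at H
    linear_combination (norm := module) H
  constructor
  · -- (ii)
    intro v1 hv1 v2 hv2
    obtain ⟨hv11, hv12⟩ := (hD2 v1).mp hv1
    obtain ⟨hv21, hv22⟩ := (hD2 v2).mp hv2
    have hAe : ⟪e1, K v1 v2⟫ = lam1 / 2 * ⟪v1, v2⟫ := by
      rw [real_inner_comm, hKcub v1 v2 e1, hKsymm v1 e1, hv12, real_inner_smul_left]
    obtain ⟨c0, L2, L3, hL2, hL3, hsum⟩ := hdecomp0 (K v1 v2 - (lam1 / 2 * ⟪v1, v2⟫) • e1)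
    obtain ⟨hL21, hL22⟩ := (hD2 L2).mp hL2
    obtain ⟨hL31, hL32⟩ := (hD3 L3).mp hL3
    have hc0 : c0 = 0 := by
      have hLperp : ⟪e1, K v1 v2 - (lam1 / 2 * ⟪v1, v2⟫) • e1⟫ = 0 := by
        rw [inner_sub_right, hAe, real_inner_smul_right, h11]; ring
      rw [hsum, inner_add_right, inner_add_right, real_inner_smul_right, h11,
        hL21, hL31] at hLperp
      linarith
    rw [hc0, zero_smul, zero_add] at hsum
    have hA : K v1 v2 = L2 + L3 + (lam1 / 2 * ⟪v1, v2⟫) • e1 := by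
      rw [← hsum]; abel
    have H := hkey v1 hv1 v2 (lam1 / 2) hv21 hv22
    rw [hA] at H
    simp only [map_add, map_smul, hKee, hL22, hL32, smul_smul, smul_add] at H
    have E : (ε - lam1 ^ 2 / 4) • L2 + (μ ^ 2 - lam1 * μ + ε) • L3 = 0 := by
      linear_combination (norm := module) H
    rw [hroot, zero_smul, add_zero] at E
    have hL20 : L2 = 0 := by
      rcases smul_eq_zero.mp E with h | h
      · exact absurd h hcoeff
      · exact h
    rw [hsum, hL20, zero_add]
    exact hL3
  · -- (iii)
    intro v hv w hw
    obtain ⟨hv1, hv2⟩ := (hD2 v).mp hv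
    obtain ⟨hw1, hw2⟩ := (hD3 w).mp hw
    have hvw : ⟪v, w⟫ = 0 := hortho v hv w hw
    have hAe : ⟪e1, K v w⟫ = 0 := by
      rw [real_inner_comm, hKcub v w e1, hKsymm v e1, hv2, real_inner_smul_left, hvw, mul_zero]
    obtain ⟨c0, A2, A3, hA2, hA3, hsum⟩ := hdecomp0 (K v w)
    obtain ⟨hA21, hA22⟩ := (hD2 A2).mp hA2
    obtain ⟨hA31, hA32⟩ := (hD3 A3).mp hA3
    have hc0 : c0 = 0 := by
      rw [hsum, inner_add_right, inner_add_right, real_inner_smul_right, h11,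
        hA21, hA31] at hAe
      linarith
    rw [hc0, zero_smul, zero_add] at hsum
    have H := hkey v hv w μ hw1 hw2
    rw [hsum, hvw] at H
    simp only [map_add, map_smul, hA22, hA32, smul_smul, smul_add, mul_zero, zero_mul,
      zero_smul, add_zero] at H
    have E : (μ ^ 2 - lam1 * μ + ε) • A2 + (ε - lam1 ^ 2 / 4) • A3 = 0 := by
      linear_combination (norm := module) H
    rw [hroot, zero_smul, zero_add] at E
    have hA30 : A3 = 0 := by
      rcases smul_eq_zero.mp E with h | h
      · exact absurd h hcoeff
      · exact h
    rw [hsum, hA30, add_zero]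
    exact hA2


end
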